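/- Let $\rho > 0$, $\lambda_1 \ge 0$, $\lambda_2 \ge 0$, and $A_1, A_2 \in \mathbb{R}$. Let $(\tilde z_1, \tilde z_2)$ be the minimizer of $\frac{\rho}{2}\sum_{k=1}^2 (z_k - A_k)^2 + \lambda_2|z_1 - z_2|$. Then $\big(S(\tilde z_1, \lambda_1/\rho), S(\tilde z_2, \lambda_1/\rho)\big)$ minimizes $\frac{\rho}{2}\sum_{k=1}^2 (z_k - A_k)^2 + \lambda_1(|z_1| + |z_2|) + \lambda_2|z_1 - z_2|$ over $(z_1, z_2) \in \mathbb{R}^2$, where $S(x, c) = \operatorname{sgn}(x)(|x| - c)_+$. -/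

import Mathlib

private lemma mul_le_abs_of (v z : ℝ) (hv : |v| ≤ 1) : v * z ≤ |z| := by
  calc v * z ≤ |v * z| := le_abs_self _
    _ = |v| * |z| := abs_mul _ _
    _ ≤ 1 * |z| := mul_le_mul_of_nonneg_right hv (abs_nonneg z)
    _ = |z| := one_mul _

private lemma st_exists (ρ lam1 a : ℝ) (hρ : 0 < ρ) (hlam1 : 0 ≤ lam1) :
    ∃ v : ℝ, |v| ≤ 1 ∧
      v * (Real.sign a * max (|a| - lam1 / ρ) 0) = |Real.sign a * max (|a| - lam1 / ρ) 0| ∧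
      ρ * (Real.sign a * max (|a| - lam1 / ρ) 0 - a) + lam1 * v = 0 := by
  have hc : 0 ≤ lam1 / ρ := div_nonneg hlam1 hρ.le
  rcases le_or_gt |a| (lam1 / ρ) with h | h
  · have hmax : max (|a| - lam1 / ρ) 0 = 0 := max_eq_right (by linarith)
    rw [hmax]
    rcases eq_or_lt_of_le hlam1 with h0 | h0
    · have ha : a = 0 := by
        rw [← h0] at h
        simp only [zero_div] at h
        have := abs_nonneg a
        have : |a| = 0 := le_antisymm h this
        exact abs_eq_zero.mp this
      exact ⟨0, by norm_num, by simp, by simp [ha]⟩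
    · refine ⟨ρ * a / lam1, ?_, by simp, by field_simp; ring⟩
      rw [abs_div, abs_mul, abs_of_pos hρ, abs_of_pos h0, div_le_one h0]
      calc ρ * |a| ≤ ρ * (lam1 / ρ) := mul_le_mul_of_nonneg_left h hρ.le
        _ = lam1 := by field_simp
  · have hmax : max (|a| - lam1 / ρ) 0 = |a| - lam1 / ρ := max_eq_left (by linarith)
    rw [hmax]
    have hρl : ρ * (lam1 / ρ) = lam1 := by field_simp
    rcases lt_trichotomy a 0 with ha | ha | ha
    · rw [abs_of_neg ha] at h
      rw [Real.sign_of_neg ha, abs_of_neg ha]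
      refine ⟨-1, by norm_num, ?_, by nlinarith⟩
      rw [abs_of_nonpos (by nlinarith : (-1 : ℝ) * (-a - lam1 / ρ) ≤ 0)]
      ring
    · exfalso; rw [ha] at h; simp at h; linarith
    · rw [abs_of_pos ha] at h
      rw [Real.sign_of_pos ha, abs_of_pos ha]
      refine ⟨1, by norm_num, ?_, by nlinarith⟩
      rw [abs_of_nonneg (by nlinarith : (0:ℝ) ≤ 1 * (a - lam1 / ρ))]
      ring

private lemma st_eq (c a : ℝ) (hc : 0 ≤ c) :
    Real.sign a * max (|a| - c) 0 = max (a - c) 0 + min (a + c) 0 := by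
  rcases lt_trichotomy a 0 with ha | ha | ha
  · rw [Real.sign_of_neg ha, abs_of_neg ha]
    rcases le_or_gt (-a) c with h1 | h1
    · rw [max_eq_right (by linarith : -a - c ≤ 0), max_eq_right (by linarith : a - c ≤ 0),
        min_eq_right (by linarith : (0:ℝ) ≤ a + c)]
      ring
    · rw [max_eq_left (by linarith : (0:ℝ) ≤ -a - c), max_eq_right (by linarith : a - c ≤ 0),
        min_eq_left (by linarith : a + c ≤ 0)]
      ring
  · rw [ha, Real.sign_zero, zero_mul,
      max_eq_right (by linarith : (0:ℝ) - c ≤ 0),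
      min_eq_right (by linarith : (0:ℝ) ≤ 0 + c)]
    ring
  · rw [Real.sign_of_pos ha, abs_of_pos ha]
    rcases le_or_gt a c with h1 | h1
    · rw [max_eq_right (by linarith : a - c ≤ 0),
        min_eq_right (by linarith : (0:ℝ) ≤ a + c)]
      ring
    · rw [max_eq_left (by linarith : (0:ℝ) ≤ a - c),
        min_eq_right (by linarith : (0:ℝ) ≤ a + c)]
      ring

private lemma st_mono (c : ℝ) (hc : 0 ≤ c) {a b : ℝ} (hab : b ≤ a) :
    Real.sign b * max (|b| - c) 0 ≤ Real.sign a * max (|a| - c) 0 := by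
  rw [st_eq c a hc, st_eq c b hc]
  exact add_le_add (max_le_max (by linarith) le_rfl) (min_le_min (by linarith) le_rfl)

set_option maxHeartbeats 1000000 in
/-- The two-class fused lasso signal approximator with both penalties is solved
by soft-thresholding the fusion-only minimizer. -/
theorem stmt_9 (ρ lam1 lam2 A1 A2 : ℝ) (hρ : 0 < ρ) (hlam1 : 0 ≤ lam1)
    (hlam2 : 0 ≤ lam2) (zt1 zt2 : ℝ)
    (hzt : ∀ z1 z2 : ℝ,
      ρ / 2 * ((zt1 - A1) ^ 2 + (zt2 - A2) ^ 2) + lam2 * |zt1 - zt2| ≤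
      ρ / 2 * ((z1 - A1) ^ 2 + (z2 - A2) ^ 2) + lam2 * |z1 - z2|) :
    ∀ z1 z2 : ℝ,
      ρ / 2 * ((Real.sign zt1 * max (|zt1| - lam1 / ρ) 0 - A1) ^ 2 +
        (Real.sign zt2 * max (|zt2| - lam1 / ρ) 0 - A2) ^ 2) +
      lam1 * (|Real.sign zt1 * max (|zt1| - lam1 / ρ) 0| +
        |Real.sign zt2 * max (|zt2| - lam1 / ρ) 0|) +
      lam2 * |Real.sign zt1 * max (|zt1| - lam1 / ρ) 0 -
        Real.sign zt2 * max (|zt2| - lam1 / ρ) 0| ≤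
      ρ / 2 * ((z1 - A1) ^ 2 + (z2 - A2) ^ 2) +
      lam1 * (|z1| + |z2|) + lam2 * |z1 - z2| := by
  intro z1 z2
  -- the mean condition: zt1 + zt2 = A1 + A2
  have hsum : zt1 + zt2 - A1 - A2 = 0 := by
    have h := hzt (zt1 - (zt1 + zt2 - A1 - A2) / 2) (zt2 - (zt1 + zt2 - A1 - A2) / 2)
    rw [show zt1 - (zt1 + zt2 - A1 - A2) / 2 - (zt2 - (zt1 + zt2 - A1 - A2) / 2)
        = zt1 - zt2 from by ring] at h
    have h2 : (zt1 + zt2 - A1 - A2) ^ 2 ≤ 0 := by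
      by_contra h3
      push_neg at h3
      nlinarith [mul_pos hρ h3]
    have := (pow_eq_zero_iff two_ne_zero).mp (le_antisymm h2 (sq_nonneg _))
    linarith
  set s1 := Real.sign zt1 * max (|zt1| - lam1 / ρ) 0 with hs1
  set s2 := Real.sign zt2 * max (|zt2| - lam1 / ρ) 0 with hs2
  obtain ⟨v1, hv1b, hv1s, hv1e⟩ := st_exists ρ lam1 zt1 hρ hlam1
  obtain ⟨v2, hv2b, hv2s, hv2e⟩ := st_exists ρ lam1 zt2 hρ hlam1
  rw [← hs1] at hv1s hv1e
  rw [← hs2] at hv2s hv2e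
  have B1' : lam1 * |s1| = ρ * (zt1 - s1) * s1 := by
    rw [← hv1s]; linear_combination s1 * hv1e
  have B2' : lam1 * |s2| = ρ * (zt2 - s2) * s2 := by
    rw [← hv2s]; linear_combination s2 * hv2e
  have B1 : ρ * (zt1 - s1) * z1 ≤ lam1 * |z1| := by
    have h1 : lam1 * (v1 * z1) ≤ lam1 * |z1| :=
      mul_le_mul_of_nonneg_left (mul_le_abs_of v1 z1 hv1b) hlam1
    have h2 : ρ * (zt1 - s1) * z1 = lam1 * (v1 * z1) := by linear_combination (-z1) * hv1e
    linarith
  have B2 : ρ * (zt2 - s2) * z2 ≤ lam1 * |z2| := by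
    have h1 : lam1 * (v2 * z2) ≤ lam1 * |z2| :=
      mul_le_mul_of_nonneg_left (mul_le_abs_of v2 z2 hv2b) hlam1
    have h2 : ρ * (zt2 - s2) * z2 = lam1 * (v2 * z2) := by linear_combination (-z2) * hv2e
    linarith
  -- fusion subgradient facts
  obtain ⟨hC, hC'⟩ : (∀ w : ℝ, ρ * (A1 - zt1) * w ≤ lam2 * |w|) ∧
      (ρ * (A1 - zt1) * (s1 - s2) = lam2 * |s1 - s2|) := by
    rcases eq_or_lt_of_le hlam2 with h0 | h0
    · -- lam2 = 0 : then zt1 = A1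
      have heq : zt1 = A1 := by
        have h := hzt A1 zt2
        rw [← h0] at h
        have h2 : (zt1 - A1) ^ 2 ≤ 0 := by
          by_contra h3
          push_neg at h3
          linarith [h, mul_pos hρ h3]
        have := (pow_eq_zero_iff two_ne_zero).mp (le_antisymm h2 (sq_nonneg _))
        linarith
      constructor
      · intro w; rw [heq, ← h0]; simp
      · rw [heq, ← h0]; simp
    · -- lam2 > 0
      have key : ∀ t : ℝ, ρ * (A1 - zt1) * t - ρ * t ^ 2 / 2 ≤
          lam2 * |zt1 - zt2 + t| - lam2 * |zt1 - zt2| := by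
        intro t
        have h := hzt (zt1 + t) zt2
        rw [show zt1 + t - zt2 = zt1 - zt2 + t from by ring] at h
        linarith [h]
      have hU1 : ρ * (A1 - zt1) ≤ lam2 := by
        by_contra hcon
        push_neg at hcon
        have ht : 0 < (ρ * (A1 - zt1) - lam2) / ρ := div_pos (by linarith) hρ
        set τ := (ρ * (A1 - zt1) - lam2) / ρ with hτ
        have hk := key τ
        have habs2 : lam2 * |zt1 - zt2 + τ| ≤ lam2 * (|zt1 - zt2| + τ) :=
          mul_le_mul_of_nonneg_left
            (by calc |zt1 - zt2 + τ| ≤ |zt1 - zt2| + |τ| := abs_add_le _ _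
                _ = |zt1 - zt2| + τ := by rw [abs_of_pos ht]) hlam2
        have hmain : (ρ * (A1 - zt1) - lam2) * τ ≤ ρ * τ ^ 2 / 2 := by linarith
        have hfld : ρ * τ = ρ * (A1 - zt1) - lam2 := by rw [hτ]; field_simp
        have hsq : ρ * τ ^ 2 = (ρ * (A1 - zt1) - lam2) * τ := by
          rw [pow_two, ← mul_assoc, hfld]
        linarith [hsq, hmain, mul_pos (show (0:ℝ) < ρ * (A1 - zt1) - lam2 by linarith) ht]
      have hU2 : -lam2 ≤ ρ * (A1 - zt1) := by
        by_contra hcon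
        push_neg at hcon
        have ht : (ρ * (A1 - zt1) + lam2) / ρ < 0 := div_neg_of_neg_of_pos (by linarith) hρ
        set τ := (ρ * (A1 - zt1) + lam2) / ρ with hτ
        have hk := key τ
        have habs2 : lam2 * |zt1 - zt2 + τ| ≤ lam2 * (|zt1 - zt2| - τ) :=
          mul_le_mul_of_nonneg_left
            (by calc |zt1 - zt2 + τ| ≤ |zt1 - zt2| + |τ| := abs_add_le _ _
                _ = |zt1 - zt2| - τ := by rw [abs_of_neg ht]; ring) hlam2
        have hmain : (ρ * (A1 - zt1) + lam2) * τ ≤ ρ * τ ^ 2 / 2 := by linarith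
        have hfld : ρ * τ = ρ * (A1 - zt1) + lam2 := by rw [hτ]; field_simp
        have hsq : ρ * τ ^ 2 = (ρ * (A1 - zt1) + lam2) * τ := by
          rw [pow_two, ← mul_assoc, hfld]
        linarith [hsq, hmain, mul_pos_of_neg_of_neg (show ρ * (A1 - zt1) + lam2 < 0 by linarith) ht]
      have hUpos : 0 < zt1 - zt2 → ρ * (A1 - zt1) = lam2 := by
        intro hd
        refine le_antisymm hU1 ?_
        by_contra hcon
        push_neg at hcon
        have hm : 0 < min (zt1 - zt2) ((lam2 - ρ * (A1 - zt1)) / ρ) :=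
          lt_min hd (div_pos (by linarith) hρ)
        set m := min (zt1 - zt2) ((lam2 - ρ * (A1 - zt1)) / ρ) with hmdef
        have hk := key (-m)
        have habs : |zt1 - zt2 + -m| = zt1 - zt2 - m := by
          rw [show zt1 - zt2 + -m = zt1 - zt2 - m from by ring]
          exact abs_of_nonneg (by linarith [min_le_left (zt1 - zt2) ((lam2 - ρ * (A1 - zt1)) / ρ)])
        rw [habs, abs_of_pos hd] at hk
        have hρm : ρ * m ≤ lam2 - ρ * (A1 - zt1) := by
          have h1 : m ≤ (lam2 - ρ * (A1 - zt1)) / ρ := min_le_right _ _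
          have h2 := mul_le_mul_of_nonneg_left h1 hρ.le
          rwa [mul_div_cancel₀ _ (ne_of_gt hρ)] at h2
        linarith [hk, mul_pos hm (show (0:ℝ) < lam2 - ρ * (A1 - zt1) by linarith),
          mul_le_mul_of_nonneg_right hρm hm.le]
      have hUneg : zt1 - zt2 < 0 → ρ * (A1 - zt1) = -lam2 := by
        intro hd
        refine le_antisymm ?_ (by linarith)
        by_contra hcon
        push_neg at hcon
        have hm : 0 < min (zt2 - zt1) ((ρ * (A1 - zt1) + lam2) / ρ) :=
          lt_min (by linarith) (div_pos (by linarith) hρ)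
        set m := min (zt2 - zt1) ((ρ * (A1 - zt1) + lam2) / ρ) with hmdef
        have hk := key m
        have habs : |zt1 - zt2 + m| = -(zt1 - zt2 + m) := by
          exact abs_of_nonpos (by linarith [min_le_left (zt2 - zt1) ((ρ * (A1 - zt1) + lam2) / ρ)])
        rw [habs, abs_of_neg hd] at hk
        have hρm : ρ * m ≤ ρ * (A1 - zt1) + lam2 := by
          have h1 : m ≤ (ρ * (A1 - zt1) + lam2) / ρ := min_le_right _ _
          have h2 := mul_le_mul_of_nonneg_left h1 hρ.le
          rwa [mul_div_cancel₀ _ (ne_of_gt hρ)] at h2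
        linarith [hk, mul_pos hm (show (0:ℝ) < ρ * (A1 - zt1) + lam2 by linarith),
          mul_le_mul_of_nonneg_right hρm hm.le]
      constructor
      · intro w
        have hUb : |ρ * (A1 - zt1)| ≤ lam2 := abs_le.mpr ⟨hU2, hU1⟩
        calc ρ * (A1 - zt1) * w ≤ |ρ * (A1 - zt1) * w| := le_abs_self _
          _ = |ρ * (A1 - zt1)| * |w| := abs_mul _ _
          _ ≤ lam2 * |w| := mul_le_mul_of_nonneg_right hUb (abs_nonneg w)
      · rcases lt_trichotomy (zt1 - zt2) 0 with hd | hd | hd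
        · have hss : s1 - s2 ≤ 0 := by
            have := st_mono (lam1 / ρ) (div_nonneg hlam1 hρ.le)
              (show zt1 ≤ zt2 by linarith)
            rw [← hs1, ← hs2] at this
            linarith
          rw [hUneg hd, abs_of_nonpos hss]; ring
        · have heq : zt1 = zt2 := by linarith
          have hss : s1 = s2 := by rw [hs1, hs2, heq]
          rw [hss]; simp
        · have hss : 0 ≤ s1 - s2 := by
            have := st_mono (lam1 / ρ) (div_nonneg hlam1 hρ.le)
              (show zt2 ≤ zt1 by linarith)
            rw [← hs1, ← hs2] at this
            linarith
          rw [hUpos hd, abs_of_nonneg hss]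
  -- final assembly
  have hCz := hC (z1 - z2)
  have hR0 : ρ * (zt1 + zt2 - A1 - A2) * (z2 - s2) = 0 := by rw [hsum]; ring
  have hsq1 : 0 ≤ ρ / 2 * (z1 - s1) ^ 2 := by positivity
  have hsq2 : 0 ≤ ρ / 2 * (z2 - s2) ^ 2 := by positivity
  have hexpand : (ρ / 2 * ((z1 - A1) ^ 2 + (z2 - A2) ^ 2) + lam1 * (|z1| + |z2|)
        + lam2 * |z1 - z2|)
      - (ρ / 2 * ((s1 - A1) ^ 2 + (s2 - A2) ^ 2) + lam1 * (|s1| + |s2|)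
        + lam2 * |s1 - s2|)
      = ρ / 2 * (z1 - s1) ^ 2 + ρ / 2 * (z2 - s2) ^ 2
      + (lam1 * |z1| - ρ * (zt1 - s1) * z1) + (ρ * (zt1 - s1) * s1 - lam1 * |s1|)
      + (lam1 * |z2| - ρ * (zt2 - s2) * z2) + (ρ * (zt2 - s2) * s2 - lam1 * |s2|)
      + (lam2 * |z1 - z2| - ρ * (A1 - zt1) * (z1 - z2))
      + (ρ * (A1 - zt1) * (s1 - s2) - lam2 * |s1 - s2|)
      + ρ * (zt1 + zt2 - A1 - A2) * (z2 - s2) := by ring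
  linarith [hexpand, B1, B1', B2, B2', hCz, hC', hsq1, hsq2, hR0]
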